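/- The spectral norm of a third order tensor A equals the square root of the spectral norm of the positive semi-definite biquadratic tensor T^{(3)} obtained by contracting A with itself on the third index. -/
import Mathlib


noncomputable section

/-- A fourth order tensor `T` of size `d1 × d2 × d1 × d2` is biquadratic. -/
def Biquadratic {d1 d2 : ℕ} (T : Fin d1 → Fin d2 → Fin d1 → Fin d2 → ℝ) : Prop :=
  ∀ i j p q, T i j p q = T p j i q ∧ T i j p q = T p q i j

/-- `⟨T, x ⊗ y ⊗ x ⊗ y⟩`. -/
def bform {d1 d2 : ℕ} (T : Fin d1 → Fin d2 → Fin d1 → Fin d2 → ℝ)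
    (x : Fin d1 → ℝ) (y : Fin d2 → ℝ) : ℝ :=
  ∑ i, ∑ j, ∑ p, ∑ q, T i j p q * x i * y j * x p * y q

/-- The spectral norm of a fourth order tensor. -/
noncomputable def bSpec {d1 d2 : ℕ} (T : Fin d1 → Fin d2 → Fin d1 → Fin d2 → ℝ) : ℝ :=
  sSup { r : ℝ | ∃ x : Fin d1 → ℝ, ∃ y : Fin d2 → ℝ,
    (∑ i, x i ^ 2 = 1) ∧ (∑ j, y j ^ 2 = 1) ∧ r = |bform T x y| }

/-- Contraction of `A` with itself on the third index. -/
def T3 {d1 d2 d3 : ℕ} (A : Fin d1 → Fin d2 → Fin d3 → ℝ) :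
    Fin d1 → Fin d2 → Fin d1 → Fin d2 → ℝ :=
  fun i j p q => ∑ k, A i j k * A p q k

/-- The spectral norm of a third order tensor. -/
noncomputable def specA {d1 d2 d3 : ℕ} (A : Fin d1 → Fin d2 → Fin d3 → ℝ) : ℝ :=
  sSup { r : ℝ | ∃ x : Fin d1 → ℝ, ∃ y : Fin d2 → ℝ, ∃ z : Fin d3 → ℝ,
    (∑ i, x i ^ 2 = 1) ∧ (∑ j, y j ^ 2 = 1) ∧ (∑ k, z k ^ 2 = 1) ∧
    r = ∑ i, ∑ j, ∑ k, A i j k * x i * y j * z k }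

namespace Stmt10Aux
variable {d1 d2 d3 : ℕ}

/-- The contraction of `A` with `x ⊗ y` on the first two indices. -/
def g (A : Fin d1 → Fin d2 → Fin d3 → ℝ) (x : Fin d1 → ℝ) (y : Fin d2 → ℝ) (k : Fin d3) : ℝ :=
  ∑ i, ∑ j, A i j k * x i * y j

lemma tri_eq (A : Fin d1 → Fin d2 → Fin d3 → ℝ) (x : Fin d1 → ℝ) (y : Fin d2 → ℝ)
    (z : Fin d3 → ℝ) :
    ∑ i, ∑ j, ∑ k, A i j k * x i * y j * z k = ∑ k, g A x y k * z k := by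
  simp only [g, Finset.sum_mul]
  trans ∑ i, ∑ k, ∑ j, A i j k * x i * y j * z k
  · refine Finset.sum_congr rfl fun i _ => ?_
    exact Finset.sum_comm
  · exact Finset.sum_comm

lemma swap5 {α β γ δ ε : Type*} [Fintype α] [Fintype β] [Fintype γ] [Fintype δ] [Fintype ε]
    (F : α → β → γ → δ → ε → ℝ) :
    ∑ i, ∑ j, ∑ p, ∑ q, ∑ k, F i j p q k = ∑ k, ∑ i, ∑ j, ∑ p, ∑ q, F i j p q k := by
  trans ∑ i, ∑ j, ∑ p, ∑ k, ∑ q, F i j p q k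
  · refine Finset.sum_congr rfl fun i _ => ?_
    refine Finset.sum_congr rfl fun j _ => ?_
    refine Finset.sum_congr rfl fun p _ => ?_
    exact Finset.sum_comm
  trans ∑ i, ∑ j, ∑ k, ∑ p, ∑ q, F i j p q k
  · refine Finset.sum_congr rfl fun i _ => ?_
    refine Finset.sum_congr rfl fun j _ => ?_
    exact Finset.sum_comm
  trans ∑ i, ∑ k, ∑ j, ∑ p, ∑ q, F i j p q k
  · refine Finset.sum_congr rfl fun i _ => ?_
    exact Finset.sum_comm
  exact Finset.sum_comm

lemma bform_eq (A : Fin d1 → Fin d2 → Fin d3 → ℝ) (x : Fin d1 → ℝ) (y : Fin d2 → ℝ) :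
    bform (T3 A) x y = ∑ k, (g A x y k) ^ 2 := by
  simp only [bform, T3, g, sq, Finset.sum_mul, Finset.mul_sum]
  rw [swap5]
  refine Finset.sum_congr rfl fun k _ => ?_
  refine Finset.sum_congr rfl fun i _ => ?_
  refine Finset.sum_congr rfl fun j _ => ?_
  refine Finset.sum_congr rfl fun p _ => ?_
  refine Finset.sum_congr rfl fun q _ => ?_
  ring

lemma abs_le_one_of_unit {n : ℕ} {x : Fin n → ℝ} (hx : ∑ i, x i ^ 2 = 1) (i : Fin n) :
    |x i| ≤ 1 := by
  have h1 : x i ^ 2 ≤ 1 := by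
    rw [← hx]
    exact Finset.single_le_sum (fun j _ => sq_nonneg (x j)) (Finset.mem_univ i)
  nlinarith [abs_nonneg (x i), sq_abs (x i)]

lemma abs_g_le (A : Fin d1 → Fin d2 → Fin d3 → ℝ) {x : Fin d1 → ℝ} {y : Fin d2 → ℝ}
    (hx : ∑ i, x i ^ 2 = 1) (hy : ∑ j, y j ^ 2 = 1) (k : Fin d3) :
    |g A x y k| ≤ ∑ i, ∑ j, |A i j k| := by
  calc |g A x y k| ≤ ∑ i, |∑ j, A i j k * x i * y j| :=
        Finset.abs_sum_le_sum_abs _ _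
    _ ≤ ∑ i, ∑ j, |A i j k * x i * y j| :=
        Finset.sum_le_sum fun i _ => Finset.abs_sum_le_sum_abs _ _
    _ ≤ ∑ i, ∑ j, |A i j k| := by
        refine Finset.sum_le_sum fun i _ => Finset.sum_le_sum fun j _ => ?_
        rw [abs_mul, abs_mul]
        calc |A i j k| * |x i| * |y j| ≤ |A i j k| * 1 * 1 :=
              mul_le_mul (mul_le_mul le_rfl (abs_le_one_of_unit hx i) (abs_nonneg _)
                (abs_nonneg _)) (abs_le_one_of_unit hy j) (abs_nonneg _) (by positivity)
          _ = |A i j k| := by ring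

/-- The set whose supremum is `specA A`. -/
def S1 (A : Fin d1 → Fin d2 → Fin d3 → ℝ) : Set ℝ :=
  { r : ℝ | ∃ x : Fin d1 → ℝ, ∃ y : Fin d2 → ℝ, ∃ z : Fin d3 → ℝ,
    (∑ i, x i ^ 2 = 1) ∧ (∑ j, y j ^ 2 = 1) ∧ (∑ k, z k ^ 2 = 1) ∧
    r = ∑ i, ∑ j, ∑ k, A i j k * x i * y j * z k }

/-- The set whose supremum is `bSpec (T3 A)`. -/
def S2 (A : Fin d1 → Fin d2 → Fin d3 → ℝ) : Set ℝ :=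
  { r : ℝ | ∃ x : Fin d1 → ℝ, ∃ y : Fin d2 → ℝ,
    (∑ i, x i ^ 2 = 1) ∧ (∑ j, y j ^ 2 = 1) ∧ r = |bform (T3 A) x y| }

lemma specA_eq (A : Fin d1 → Fin d2 → Fin d3 → ℝ) : specA A = sSup (S1 A) := rfl
lemma bSpec_eq (A : Fin d1 → Fin d2 → Fin d3 → ℝ) : bSpec (T3 A) = sSup (S2 A) := rfl

lemma S1_bdd (A : Fin d1 → Fin d2 → Fin d3 → ℝ) : BddAbove (S1 A) := by
  refine ⟨∑ k, ∑ i, ∑ j, |A i j k|, ?_⟩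
  rintro r ⟨x, y, z, hx, hy, hz, rfl⟩
  rw [tri_eq]
  calc ∑ k, g A x y k * z k ≤ ∑ k, |g A x y k * z k| :=
        Finset.sum_le_sum fun k _ => le_abs_self _
    _ ≤ ∑ k, ∑ i, ∑ j, |A i j k| := by
        refine Finset.sum_le_sum fun k _ => ?_
        rw [abs_mul]
        calc |g A x y k| * |z k| ≤ |g A x y k| * 1 :=
              mul_le_mul_of_nonneg_left (abs_le_one_of_unit hz k) (abs_nonneg _)
          _ = |g A x y k| := mul_one _
          _ ≤ ∑ i, ∑ j, |A i j k| := abs_g_le A hx hy k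

lemma S2_bdd (A : Fin d1 → Fin d2 → Fin d3 → ℝ) : BddAbove (S2 A) := by
  refine ⟨∑ k, (∑ i, ∑ j, |A i j k|) ^ 2, ?_⟩
  rintro r ⟨x, y, hx, hy, rfl⟩
  rw [bform_eq, abs_of_nonneg (Finset.sum_nonneg fun k _ => sq_nonneg _)]
  refine Finset.sum_le_sum fun k _ => ?_
  rw [← sq_abs]
  exact pow_le_pow_left₀ (abs_nonneg _) (abs_g_le A hx hy k) 2

lemma specA_nonneg (A : Fin d1 → Fin d2 → Fin d3 → ℝ) : 0 ≤ specA A := by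
  rw [specA_eq]
  by_cases hne : (S1 A).Nonempty
  · obtain ⟨r, x, y, z, hx, hy, hz, hr⟩ := hne
    have hmem : r ∈ S1 A := ⟨x, y, z, hx, hy, hz, hr⟩
    have hmem' : -r ∈ S1 A := by
      refine ⟨fun i => -x i, y, z, by simpa [neg_sq] using hx, hy, hz, ?_⟩
      simp only [mul_neg, neg_mul, Finset.sum_neg_distrib]
      rw [hr]
    have h1 := le_csSup (S1_bdd A) hmem
    have h2 := le_csSup (S1_bdd A) hmem'
    linarith
  · rw [Set.not_nonempty_iff_eq_empty] at hne
    rw [hne, Real.sSup_empty]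

end Stmt10Aux

open Stmt10Aux in
theorem stmt10 {d1 d2 d3 : ℕ} (A : Fin d1 → Fin d2 → Fin d3 → ℝ) :
    specA A = Real.sqrt (bSpec (T3 A)) := by
  refine le_antisymm ?_ ?_
  · rw [specA_eq]
    refine Real.sSup_le ?_ (Real.sqrt_nonneg _)
    rintro r ⟨x, y, z, hx, hy, hz, rfl⟩
    rw [tri_eq]
    have cs := Finset.sum_mul_sq_le_sq_mul_sq Finset.univ (g A x y) z
    rw [hz, mul_one] at cs
    have h2 : (∑ k, g A x y k * z k) ≤ Real.sqrt (∑ k, g A x y k ^ 2) := by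
      have h3 := Real.sqrt_le_sqrt cs
      rw [Real.sqrt_sq_eq_abs] at h3
      exact (le_abs_self _).trans h3
    refine h2.trans (Real.sqrt_le_sqrt ?_)
    have hmem : |bform (T3 A) x y| ∈ S2 A := ⟨x, y, hx, hy, rfl⟩
    have he : ∑ k, g A x y k ^ 2 = |bform (T3 A) x y| := by
      rw [bform_eq, abs_of_nonneg (Finset.sum_nonneg fun k _ => sq_nonneg _)]
    rw [he, bSpec_eq]
    exact le_csSup (S2_bdd A) hmem
  · have hb2 : bSpec (T3 A) ≤ specA A ^ 2 := by
      rw [bSpec_eq]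
      refine Real.sSup_le ?_ (sq_nonneg _)
      rintro s ⟨x, y, hx, hy, rfl⟩
      rw [bform_eq, abs_of_nonneg (Finset.sum_nonneg fun k _ => sq_nonneg _)]
      by_cases hc : (∑ k, g A x y k ^ 2) = 0
      · rw [hc]; exact sq_nonneg _
      · have hpos : 0 < ∑ k, g A x y k ^ 2 :=
          lt_of_le_of_ne (Finset.sum_nonneg fun k _ => sq_nonneg _) (Ne.symm hc)
        set c := Real.sqrt (∑ k, g A x y k ^ 2) with hcdef
        have hcpos : 0 < c := Real.sqrt_pos.mpr hpos
        have hcsq : c * c = ∑ k, g A x y k ^ 2 := Real.mul_self_sqrt hpos.le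
        have hzunit : ∑ k, (g A x y k / c) ^ 2 = 1 := by
          simp_rw [div_pow, ← Finset.sum_div]
          rw [show c ^ 2 = c * c from sq c, hcsq, div_self hc]
        have hval : (∑ i, ∑ j, ∑ k, A i j k * x i * y j * (g A x y k / c)) = c := by
          rw [tri_eq]
          have : ∀ k, g A x y k * (g A x y k / c) = g A x y k ^ 2 / c := by
            intro k; rw [sq]; ring
          simp_rw [this, ← Finset.sum_div]
          rw [← hcsq, mul_div_assoc, div_self hcpos.ne', mul_one]
        have hmem : c ∈ S1 A :=
          ⟨x, y, fun k => g A x y k / c, hx, hy, hzunit, hval.symm⟩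
        have hle : c ≤ specA A := by
          rw [specA_eq]; exact le_csSup (S1_bdd A) hmem
        calc ∑ k, g A x y k ^ 2 = c ^ 2 := by rw [sq, hcsq]
          _ ≤ specA A ^ 2 := pow_le_pow_left₀ hcpos.le hle 2
    calc Real.sqrt (bSpec (T3 A)) ≤ Real.sqrt (specA A ^ 2) := Real.sqrt_le_sqrt hb2
      _ = specA A := Real.sqrt_sq (specA_nonneg A)
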